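/- Let A be an automaton with timers and ρ a padded timed run of A whose block graph G_ρ is cyclic. Then every padded timed run ρ' of A with the same untimed trace as ρ contains at least one race. -/

import Mathlib

set_option maxHeartbeats 1000000

namespace AwT

/-- Actions of an automaton with timers: reading an input, or processing the timeout of a timer. -/
inductive Act (I X : Type) where
  | input : I → Act I X
  | timeout : X → Act I X

/-- Updates: `some (x, c)` starts timer `x` with positive integer value `c`; `none` is `⊥`. -/
abbrev Upd (X : Type) := Option (X × ℕ+)

/-- An automaton with timers (AT). `X` is the (finite) set of timers, `I` the (finite) set of
inputs, `Q` the (finite) set of states. -/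
structure AT (X I Q : Type) [DecidableEq X] where
  q0 : Q
  χ : Q → Finset X
  δ : Q → Act I X → Option (Q × Upd X)
  init_active : χ q0 = ∅
  defined_iff : ∀ q a, (δ q a).isSome ↔
      (∃ i, a = Act.input i) ∨ (∃ x ∈ χ q, a = Act.timeout x)
  timeout_self : ∀ q x q' y c, δ q (Act.timeout x) = some (q', some (y, c)) → y = x
  noupdate_sub : ∀ q a q', δ q a = some (q', none) → χ q' ⊆ χ q
  noupdate_timeout : ∀ q x q', δ q (Act.timeout x) = some (q', none) → x ∉ χ q'
  update_mem : ∀ q a q' x c, δ q a = some (q', some (x, c)) → x ∈ χ q'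
  update_sub : ∀ q a q' x c, δ q a = some (q', some (x, c)) → χ q' \ {x} ⊆ χ q

variable {X I Q : Type} [DecidableEq X]

/-- A timed run `(q₀,κ₀) d₁ i₁/u₁ … dₙ iₙ/uₙ d_{n+1} (q,κ)` of an AT, with `n` discrete
transitions.  `states k` and `vals k` give the configuration before the `k`-th delay,
`delays k` is the `k`-th delay, and `acts k`/`upds k` are the `k`-th action and update. -/
structure TimedRun (A : AT X I Q) (n : ℕ) where
  states : Fin (n+1) → Q
  vals : Fin (n+1) → X → ℝ
  delays : Fin (n+1) → ℝ
  acts : Fin n → Act I X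
  upds : Fin n → Upd X
  init_state : states 0 = A.q0
  init_val : ∀ x, vals 0 x = 0
  delays_nonneg : ∀ k, 0 ≤ delays k
  delays_le : ∀ k, ∀ x ∈ A.χ (states k), delays k ≤ vals k x
  trans : ∀ k : Fin n, A.δ (states k.castSucc) (acts k) = some (states k.succ, upds k)
  timeout_zero : ∀ (k : Fin n) (x : X), acts k = Act.timeout x →
      vals k.castSucc x - delays k.castSucc = 0
  val_step : ∀ (k : Fin n) (y : X),
      vals k.succ y = (upds k).elim (vals k.castSucc y - delays k.castSucc)
        (fun p => if y = p.1 then ((p.2 : ℕ) : ℝ) else vals k.castSucc y - delays k.castSucc)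

variable {A : AT X I Q} {n : ℕ}

/-- A timed run is padded if its first and last delays are positive and no active timer has
value 0 in its last configuration. -/
def Padded (ρ : TimedRun A n) : Prop :=
  0 < ρ.delays 0 ∧ 0 < ρ.delays (Fin.last n) ∧
    ∀ x ∈ A.χ (ρ.states (Fin.last n)),
      ρ.vals (Fin.last n) x - ρ.delays (Fin.last n) ≠ 0

/-- Timer fates of blocks: `⊥`, `●` (discarded at value zero), `×`. -/
inductive Fate where
  | bot | disc0 | cross
  deriving DecidableEq

/-- The transition at index `ℓ` discards the timer `x`: `x` is active before the transition,
the action is not `to[x]`, and the transition stops or restarts `x`. -/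
def Discards (ρ : TimedRun A n) (ℓ : Fin n) (x : X) : Prop :=
  x ∈ A.χ (ρ.states ℓ.castSucc) ∧ ρ.acts ℓ ≠ Act.timeout x ∧
    (x ∉ A.χ (ρ.states ℓ.succ) ∨ ∃ c, ρ.upds ℓ = some (x, c))

/-- Action `k` triggers action `k'`. -/
def Triggers (ρ : TimedRun A n) (k k' : Fin n) : Prop :=
  k < k' ∧ ∃ x c, ρ.upds k = some (x, c) ∧ ρ.acts k' = Act.timeout x ∧
    ∀ ℓ, k < ℓ → ℓ < k' → ρ.acts ℓ ≠ Act.timeout x ∧ ¬ Discards ρ ℓ x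

/-- After action `k` (which restarts `x`), the first transition discarding `x` does so while the
value of `x` is zero. -/
def DiscardedAtZeroAfter (ρ : TimedRun A n) (k : Fin n) (x : X) : Prop :=
  ∃ ℓ, k < ℓ ∧ Discards ρ ℓ x ∧ (∀ m, k < m → m < ℓ → ¬ Discards ρ m x) ∧
    ρ.vals ℓ.castSucc x - ρ.delays ℓ.castSucc = 0

/-- `γ` is the timer fate of a block whose index sequence is `ks`. -/
def FateOf (ρ : TimedRun A n) (ks : List (Fin n)) (γ : Fate) : Prop :=
  ∀ k, ks.getLast? = some k →
    ((ρ.upds k = none → γ = Fate.bot) ∧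
     ∀ x c, ρ.upds k = some (x, c) →
        ((DiscardedAtZeroAfter ρ k x → γ = Fate.disc0) ∧
         (¬ DiscardedAtZeroAfter ρ k x → γ = Fate.cross)))

/-- `(ks, γ)` is a block of `ρ`: `ks` is a maximal chain of actions each triggering the next,
starting with an input-action, and `γ` is its timer fate. -/
def IsBlock (ρ : TimedRun A n) (ks : List (Fin n)) (γ : Fate) : Prop :=
  ks ≠ [] ∧ List.Chain' (Triggers ρ) ks ∧
    (∀ k, ks.head? = some k → ∃ i, ρ.acts k = Act.input i) ∧
    (∀ k k', ks.getLast? = some k → ¬ Triggers ρ k k') ∧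
    FateOf ρ ks γ

/-- The sum of the delays strictly between action `k` and action `k'` (for `k ≤ k'`). -/
def delayBetween (ρ : TimedRun A n) (k k' : Fin n) : ℝ :=
  ∑ ℓ ∈ Finset.Ioc k k', ρ.delays ℓ.castSucc

/-- `B ≺ B'`: blocks `B` and `B'` participate in a race, witnessed either by an action of `B`
occurring before an action of `B'` with total delay zero in between, or by an action of `B`
being the first to discard the timer (re)started by the last action of `B'` while it has
value zero. -/
def Prec (ρ : TimedRun A n) (B B' : List (Fin n) × Fate) : Prop :=
  (∃ k ∈ B.1, ∃ k' ∈ B'.1, k < k' ∧ delayBetween ρ k k' = 0) ∨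
  (B'.2 = Fate.disc0 ∧ ∃ k' x c, B'.1.getLast? = some k' ∧ ρ.upds k' = some (x, c) ∧
     ∃ ℓ ∈ B.1, k' < ℓ ∧ Discards ρ ℓ x ∧ ∀ m, k' < m → m < ℓ → ¬ Discards ρ m x)

/-- Two blocks participate in a (common) race. -/
def BlocksRace (ρ : TimedRun A n) (B B' : List (Fin n) × Fate) : Prop :=
  Prec ρ B B' ∨ Prec ρ B' B

/-- The run contains a race. -/
def HasRace (ρ : TimedRun A n) : Prop :=
  ∃ B B' : List (Fin n) × Fate, IsBlock ρ B.1 B.2 ∧ IsBlock ρ B'.1 B'.2 ∧ B ≠ B' ∧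
    BlocksRace ρ B B'

/-- The block graph of `ρ` (vertices: blocks, edges: `≺`) has a cycle. -/
def HasCycle (ρ : TimedRun A n) : Prop :=
  ∃ (m : ℕ) (f : Fin (m+1) → List (Fin n) × Fate),
    0 < m ∧ (∀ j, IsBlock ρ (f j).1 (f j).2) ∧ f (Fin.last m) = f 0 ∧
      ∀ j : Fin m, Prec ρ (f j.castSucc) (f j.succ)

open Classical in
/-- The delays of `ρ` after shifting the block whose set of action indices is `S` by `ε`:
the delay preceding an action of the block whose predecessor is not in the block gains `ε`,
and the delay following an action of the block whose successor is not in the block loses `ε`. -/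
noncomputable def wiggledDelay (ρ : TimedRun A n) (S : Set (Fin n)) (ε : ℝ)
    (j : Fin (n+1)) : ℝ :=
  ρ.delays j
    + (if (∃ k : Fin n, k.castSucc = j ∧ k ∈ S ∧ ∀ k' : Fin n, k'.succ = j → k' ∉ S)
        then ε else 0)
    - (if (∃ k : Fin n, k.succ = j ∧ k ∈ S ∧ ∀ k' : Fin n, k'.castSucc = j → k' ∉ S)
        then ε else 0)

/-- `ρ'` is obtained from `ρ` by shifting the actions with indices in `S` by `ε`. -/
def WiggleSpec (ρ ρ' : TimedRun A n) (S : Set (Fin n)) (ε : ℝ) : Prop :=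
  ρ'.states = ρ.states ∧ ρ'.acts = ρ.acts ∧ ρ'.upds = ρ.upds ∧
    ∀ j, ρ'.delays j = wiggledDelay ρ S ε j

/-- The untimed trace of a run: the alternating sequence of states and actions. -/
def untime (ρ : TimedRun A n) : List (Q × Act I X) × Q :=
  (List.ofFn (fun k : Fin n => (ρ.states k.castSucc, ρ.acts k)), ρ.states (Fin.last n))

/-- The block with index sequence `ks` can be wiggled: for some `ε ≠ 0`, shifting it by `ε`
yields a padded timed run (with the same untimed trace) in which it participates in no race. -/
def CanWiggleBlock (ρ : TimedRun A n) (ks : List (Fin n)) : Prop :=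
  ∃ ε : ℝ, ε ≠ 0 ∧ ∃ ρ' : TimedRun A n, WiggleSpec ρ ρ' {k | k ∈ ks} ε ∧ Padded ρ' ∧
    ∀ (γ₁ : Fate) (ks₂ : List (Fin n)) (γ₂ : Fate),
      IsBlock ρ' ks γ₁ → IsBlock ρ' ks₂ γ₂ → (ks, γ₁) ≠ (ks₂, γ₂) →
        ¬ BlocksRace ρ' (ks, γ₁) (ks₂, γ₂)

/-- One wiggling step: wiggle a single block of `ρ`. -/
def WiggleStep (ρ ρ' : TimedRun A n) : Prop :=
  ∃ (ks : List (Fin n)) (γ : Fate) (ε : ℝ), ε ≠ 0 ∧ IsBlock ρ ks γ ∧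
    WiggleSpec ρ ρ' {k | k ∈ ks} ε ∧ Padded ρ' ∧
    ∀ (γ₁ : Fate) (ks₂ : List (Fin n)) (γ₂ : Fate),
      IsBlock ρ' ks γ₁ → IsBlock ρ' ks₂ γ₂ → (ks, γ₁) ≠ (ks₂, γ₂) →
        ¬ BlocksRace ρ' (ks, γ₁) (ks₂, γ₂)

/-- `ρ` can be wiggled: wiggling its blocks one at a time yields a race-free padded run with
the same untimed trace. -/
def Wigglable (ρ : TimedRun A n) : Prop :=
  ∃ ρ' : TimedRun A n, Relation.ReflTransGen WiggleStep ρ ρ' ∧ Padded ρ' ∧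
    ¬ HasRace ρ' ∧ untime ρ' = untime ρ

/-- `A` is race-avoiding. -/
def RaceAvoiding (A : AT X I Q) : Prop :=
  ∀ (n : ℕ) (ρ : TimedRun A n), Padded ρ → HasRace ρ →
    ∃ (n' : ℕ) (ρ' : TimedRun A n'), Padded ρ' ∧ ¬ HasRace ρ' ∧ untime ρ' = untime ρ

/-- All delays of the run are strictly positive. -/
def AllPos (ρ : TimedRun A n) : Prop := ∀ j, 0 < ρ.delays j

/-- `ks` is (the index sequence of) an `x`-block: its actions (re)start the timer `x`. -/
def IsXBlock (ρ : TimedRun A n) (ks : List (Fin n)) (x : X) : Prop :=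
  ∃ k ∈ ks, ∃ c, ρ.upds k = some (x, c)

/-- Modified semantics from a total order on timers: in every race, any action of an `x`-block
is processed before any action of a `y`-block whenever `x < y`. -/
def OrderedSem [LT X] (ρ : TimedRun A n) : Prop :=
  ∀ (ks : List (Fin n)) (γ : Fate) (ks' : List (Fin n)) (γ' : Fate) (x y : X),
    IsBlock ρ ks γ → IsBlock ρ ks' γ' → IsXBlock ρ ks x → IsXBlock ρ ks' y → x < y →
      ∀ k ∈ ks, ∀ k' ∈ ks',
        ((k < k' ∧ delayBetween ρ k k' = 0) ∨ (k' < k ∧ delayBetween ρ k' k = 0)) → k < k'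

/-! ### Configurations, timer-equivalence and the region automaton -/

/-- Valuations `κ, κ'` (on the active timers of `q`) are timer-equivalent. -/
def ValEquiv (A : AT X I Q) (q : Q) (κ κ' : X → ℝ) : Prop :=
  ∀ x ∈ A.χ q, (⌊κ x⌋ = ⌊κ' x⌋) ∧ (Int.fract (κ x) = 0 ↔ Int.fract (κ' x) = 0) ∧
    ∀ y ∈ A.χ q, (Int.fract (κ x) ≤ Int.fract (κ y) ↔ Int.fract (κ' x) ≤ Int.fract (κ' y))

/-- Timer-equivalence of configurations. -/
def ConfigEquiv (A : AT X I Q) (c c' : Q × (X → ℝ)) : Prop :=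
  c.1 = c'.1 ∧ ValEquiv A c.1 c.2 c'.2

/-- A discrete transition between configurations, on action `a` with update `u`. -/
def DiscreteStep (A : AT X I Q) (c : Q × (X → ℝ)) (a : Act I X) (u : Upd X)
    (c' : Q × (X → ℝ)) : Prop :=
  A.δ c.1 a = some (c'.1, u) ∧ (∀ x, a = Act.timeout x → c.2 x = 0) ∧
    ∀ y ∈ A.χ c'.1,
      c'.2 y = u.elim (c.2 y) (fun p => if y = p.1 then ((p.2 : ℕ) : ℝ) else c.2 y)

/-- A delay transition between configurations, of duration `d ≥ 0`. -/
def DelayStep (A : AT X I Q) (c : Q × (X → ℝ)) (d : ℝ) (c' : Q × (X → ℝ)) : Prop :=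
  0 ≤ d ∧ c'.1 = c.1 ∧ (∀ x ∈ A.χ c.1, d ≤ c.2 x) ∧ ∀ x ∈ A.χ c.1, c'.2 x = c.2 x - d

/-- One step of a timed run between configurations: a delay or a discrete transition. -/
def Step (A : AT X I Q) (c c' : Q × (X → ℝ)) : Prop :=
  (∃ d, DelayStep A c d c') ∨ (∃ a u, DiscreteStep A c a u c')

/-- One transition of the region automaton between the classes of `c` and `c'`:
some representatives are related by a positive delay (`τ`) or a discrete transition. -/
def RegStep (A : AT X I Q) (c c' : Q × (X → ℝ)) : Prop :=
  ∃ c₁ c₂, ConfigEquiv A c c₁ ∧ ConfigEquiv A c' c₂ ∧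
    ((∃ d, 0 < d ∧ DelayStep A c₁ d c₂) ∨ ∃ a u, DiscreteStep A c₁ a u c₂)

/-! ### The extended run and relative elapsed time -/

open Classical in
/-- The timers discarded by the transition at index `k`. -/
noncomputable def discardedSet (ρ : TimedRun A n) (k : Fin n) : Finset X :=
  (A.χ (ρ.states k.castSucc)).filter (fun x => Discards ρ k x)

/-- Positions of actions in the extended run of `ρ`: `(k, 0)` is the `k`-th action of `ρ`,
and `(k, j)` for `1 ≤ j` is the `j`-th zero-delay pseudo-action (`●` or `×`) inserted after
it, one for each timer it discards. -/
def EPos (ρ : TimedRun A n) : Type := {p : Fin n × ℕ // p.2 ≤ (discardedSet ρ p.1).card}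

open Classical in
/-- Relative elapsed time between two positions of the extended run: the sum `d` of the delays
between them if the first occurs (weakly) before the second, and `-d` otherwise. -/
noncomputable def reltime (ρ : TimedRun A n) (p p' : EPos ρ) : ℝ :=
  if p.1.1 < p'.1.1 ∨ (p.1.1 = p'.1.1 ∧ p.1.2 ≤ p'.1.2) then delayBetween ρ p.1.1 p'.1.1
  else - delayBetween ρ p'.1.1 p.1.1

end AwT

/-! ### Linear-bounded Turing machines -/

/-- A (nondeterministic) linear-bounded Turing machine with alphabet `σ` and states `Q`.
A transition `(q, α, α', D, q')` reads `α`, writes `α'` and moves left (`D = false`) or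
right (`D = true`). -/
structure LBTM (σ Q : Type) where
  q0 : Q
  qF : Q
  T : Finset (Q × σ × σ × Bool × Q)

/-- One step of an LBTM on a tape of length `n`; configurations are (state, tape, head). -/
def LBTMStep {σ Q : Type} (M : LBTM σ Q) {n : ℕ}
    (c c' : Q × (Fin n → σ) × Fin n) : Prop :=
  ∃ α' : σ, ∃ D : Bool, (c.1, c.2.1 c.2.2, α', D, c'.1) ∈ M.T ∧
    c'.2.1 = Function.update c.2.1 c.2.2 α' ∧
    ((D = true ∧ (c'.2.2 : ℕ) = (c.2.2 : ℕ) + 1) ∨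
     (D = false ∧ (c.2.2 : ℕ) = (c'.2.2 : ℕ) + 1))

/-- `M` accepts the word `w`. -/
def LBTMAccepts {σ Q : Type} (M : LBTM σ Q) {n : ℕ} (hn : 0 < n) (w : Fin n → σ) : Prop :=
  ∃ c : Q × (Fin n → σ) × Fin n,
    Relation.ReflTransGen (LBTMStep M) (M.q0, w, ⟨0, hn⟩) c ∧ c.1 = M.qF
namespace AwT

variable {X I Q : Type} [DecidableEq X] {A : AT X I Q} {n : ℕ}

/-- Accumulated time up to (and including) the delay preceding action `k`. -/
noncomputable def accTime (ρ : TimedRun A n) (k : Fin n) : ℝ :=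
  ∑ ℓ ∈ Finset.Iic k, ρ.delays ℓ.castSucc

lemma accTime_add (σ : TimedRun A n) {a b : Fin n} (h : a ≤ b) :
    accTime σ a + delayBetween σ a b = accTime σ b := by
  rw [accTime, accTime, delayBetween, ← Finset.sum_union]
  · congr 1
    ext p
    simp only [Finset.mem_union, Finset.mem_Iic, Finset.mem_Ioc, Fin.le_def, Fin.lt_def] at *
    omega
  · rw [Finset.disjoint_left]
    intro p hp hp'
    simp only [Finset.mem_Iic, Finset.mem_Ioc, Fin.le_def, Fin.lt_def] at *
    omega

lemma delayBetween_nonneg (σ : TimedRun A n) (a b : Fin n) : 0 ≤ delayBetween σ a b :=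
  Finset.sum_nonneg fun ℓ _ => σ.delays_nonneg _

lemma delayBetween_split (σ : TimedRun A n) {a b : Fin n} (h : a < b) :
    delayBetween σ a b = (∑ p ∈ Finset.Ioo a b, σ.delays p.castSucc) + σ.delays b.castSucc := by
  rw [delayBetween, ← Finset.Ioo_insert_right h, Finset.sum_insert (by simp)]
  ring

lemma delayBetween_add (σ : TimedRun A n) {a b c : Fin n} (hab : a ≤ b) (hbc : b ≤ c) :
    delayBetween σ a b + delayBetween σ b c = delayBetween σ a c := by
  have h1 := accTime_add σ hab
  have h2 := accTime_add σ hbc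
  have h3 := accTime_add σ (le_trans hab hbc)
  linarith

/-- The timer value after a restart, while the timer is neither timed out nor discarded. -/
lemma val_of_upd (σ : TimedRun A n) {k : Fin n} {x : X} {c : ℕ+}
    (hu : σ.upds k = some (x, c)) :
    ∀ m : Fin n, k < m →
      (∀ ℓ : Fin n, k < ℓ → ℓ < m → σ.acts ℓ ≠ Act.timeout x ∧ ¬ Discards σ ℓ x) →
      x ∈ A.χ (σ.states m.castSucc) ∧
        σ.vals m.castSucc x = (c : ℝ) - ∑ ℓ ∈ Finset.Ioo k m, σ.delays ℓ.castSucc := by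
  have main : ∀ N : ℕ, ∀ m : Fin n, m.val ≤ N → k < m →
      (∀ ℓ : Fin n, k < ℓ → ℓ < m → σ.acts ℓ ≠ Act.timeout x ∧ ¬ Discards σ ℓ x) →
      x ∈ A.χ (σ.states m.castSucc) ∧
        σ.vals m.castSucc x = (c : ℝ) - ∑ ℓ ∈ Finset.Ioo k m, σ.delays ℓ.castSucc := by
    intro N
    induction N with
    | zero =>
      intro m hm hkm _
      exfalso
      have := Fin.lt_def.mp hkm
      omega
    | succ N ih =>
      intro m hmN hkm hbet
      by_cases hbase : m.val = k.val + 1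
      · -- base case : m = k + 1
        have hms : m.castSucc = k.succ := by
          apply Fin.ext; simp [Fin.val_succ, hbase]
        have hIoo : Finset.Ioo k m = ∅ := by
          apply Finset.eq_empty_iff_forall_notMem.2
          intro p hp
          simp only [Finset.mem_Ioo, Fin.lt_def] at hp
          omega
        have hval := σ.val_step k x
        rw [hu] at hval
        simp only [Option.elim, if_pos rfl] at hval
        constructor
        · rw [hms]
          exact A.update_mem _ _ _ _ _ (by rw [σ.trans k, hu])
        · rw [hms, hval, hIoo]
          simp
      · -- inductive step
        have hmv : k.val + 1 < m.val := by
          have := hkm; simp only [Fin.lt_def] at this; omega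
        have hm'lt : m.val - 1 < n := lt_trans (by omega) m.isLt
        set m' : Fin n := ⟨m.val - 1, hm'lt⟩ with hm'def
        have hkm' : k < m' := by simp [Fin.lt_def, hm'def]; omega
        have hm'm : m' < m := by simp [Fin.lt_def, hm'def]; omega
        obtain ⟨hχ, hv⟩ := ih m' (by simp [hm'def]; omega) hkm'
          (fun ℓ h1 h2 => hbet ℓ h1 (lt_trans h2 hm'm))
        obtain ⟨hna, hnd⟩ := hbet m' hkm' hm'm
        have hnotor : ¬ (x ∉ A.χ (σ.states m'.succ) ∨ ∃ c', σ.upds m' = some (x, c')) :=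
          fun h => hnd ⟨hχ, hna, h⟩
        push_neg at hnotor
        obtain ⟨hχ', hnoupd⟩ := hnotor
        have hsucc : m'.succ = m.castSucc := by
          apply Fin.ext; simp [Fin.val_succ, hm'def]; omega
        have hval := σ.val_step m' x
        have hvx : σ.vals m'.succ x = σ.vals m'.castSucc x - σ.delays m'.castSucc := by
          rcases hup : σ.upds m' with _ | ⟨y, c'⟩
          · rw [hup] at hval; simpa using hval
          · rw [hup] at hval
            have hxy : x ≠ y := by
              intro h; subst h; exact hnoupd c' hup
            simpa [hxy] using hval
        have hIoo : Finset.Ioo k m = insert m' (Finset.Ioo k m') := by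
          ext p
          simp only [Finset.mem_insert, Finset.mem_Ioo, Fin.lt_def, hm'def, Fin.ext_iff]
          omega
        have hm'not : m' ∉ Finset.Ioo k m' := by simp
        constructor
        · rw [← hsucc]; exact hχ'
        · rw [← hsucc, hvx, hv, hIoo, Finset.sum_insert hm'not]
          ring
  intro m hkm hbet
  exact main m.val m le_rfl hkm hbet

lemma triggers_lt {σ : TimedRun A n} {k k' : Fin n} (h : Triggers σ k k') : k < k' := h.1

lemma triggers_delay {σ : TimedRun A n} {k k' : Fin n} {x : X} {c : ℕ+}
    (hu : σ.upds k = some (x, c)) (ht : Triggers σ k k') :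
    delayBetween σ k k' = (c : ℝ) := by
  obtain ⟨hlt, x', c', hu', hact, hbet⟩ := ht
  rw [hu] at hu'
  injection hu' with h
  injection h with h1 h2
  subst h1; subst h2
  obtain ⟨hχ, hv⟩ := val_of_upd σ hu k' hlt hbet
  have hz := σ.timeout_zero k' x hact
  rw [delayBetween_split σ hlt]
  rw [hv] at hz
  linarith


section ChainHelpers

variable {α : Type*} {R : α → α → Prop}

lemma chain'_head_rel (htrans : ∀ a b c, R a b → R b c → R a c) :
    ∀ {l : List α} {h a : α}, List.Chain' R l → l.head? = some h → a ∈ l → a = h ∨ R h a := by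
  intro l
  induction l with
  | nil => simp
  | cons x t ih =>
    intro h a hch hh ha
    rw [List.head?_cons, Option.some.injEq] at hh
    subst hh
    rcases List.mem_cons.1 ha with rfl | ha'
    · exact Or.inl rfl
    · cases t with
      | nil => simp at ha'
      | cons y t' =>
        obtain ⟨hxy, hch'⟩ := List.isChain_cons_cons.1 hch
        rcases ih hch' rfl ha' with rfl | hya
        · exact Or.inr hxy
        · exact Or.inr (htrans _ _ _ hxy hya)

lemma chain'_last_rel (htrans : ∀ a b c, R a b → R b c → R a c) :
    ∀ {l : List α} {g a : α}, List.Chain' R l → l.getLast? = some g → a ∈ l → a = g ∨ R a g := by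
  intro l
  induction l with
  | nil => simp
  | cons x t ih =>
    intro g a hch hg ha
    cases t with
    | nil =>
      simp only [List.getLast?_singleton, Option.some.injEq] at hg
      subst hg
      exact Or.inl (by simpa using ha)
    | cons y t' =>
      rw [List.getLast?_cons_cons] at hg
      obtain ⟨hxy, hch'⟩ := List.isChain_cons_cons.1 hch
      rcases List.mem_cons.1 ha with rfl | ha'
      · rcases ih hch' hg List.mem_cons_self with rfl | hyg
        · exact Or.inr hxy
        · exact Or.inr (htrans _ _ _ hxy hyg)
      · exact ih hch' hg ha'

lemma chain'_rel_of_lt [LinearOrder α] (htrans : ∀ a b c, R a b → R b c → R a c)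
    (himp : ∀ a b, R a b → a < b) :
    ∀ {l : List α} {a b : α}, List.Chain' R l → a ∈ l → b ∈ l → a < b → R a b := by
  intro l
  induction l with
  | nil => simp
  | cons x t ih =>
    intro a b hch ha hb hab
    have hhead : ∀ z ∈ t, R x z := by
      intro z hz
      cases t with
      | nil => simp at hz
      | cons y t' =>
        obtain ⟨hxy, hch'⟩ := List.isChain_cons_cons.1 hch
        rcases chain'_head_rel htrans hch' rfl hz with rfl | hyz
        · exact hxy
        · exact htrans _ _ _ hxy hyz
    rcases List.mem_cons.1 ha with rfl | ha' <;> rcases List.mem_cons.1 hb with rfl | hb'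
    · exact absurd hab (lt_irrefl _)
    · exact hhead _ hb'
    · exact absurd (himp _ _ (hhead _ ha')) (by intro h; exact absurd (lt_trans h hab) (lt_irrefl _))
    · exact ih hch.tail ha' hb' hab

end ChainHelpers

section Transfer

variable {ρ ρ' : TimedRun A n}

lemma discards_congr (h1 : ρ'.states = ρ.states) (h2 : ρ'.acts = ρ.acts)
    (h3 : ρ'.upds = ρ.upds) (ℓ : Fin n) (x : X) : Discards ρ' ℓ x = Discards ρ ℓ x := by
  unfold Discards
  rw [h1, h2, h3]

lemma triggers_congr (h1 : ρ'.states = ρ.states) (h2 : ρ'.acts = ρ.acts)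
    (h3 : ρ'.upds = ρ.upds) (k k' : Fin n) : Triggers ρ' k k' = Triggers ρ k k' := by
  unfold Triggers
  rw [h2, h3]
  congr! 10
  rw [discards_congr h1 h2 h3]

lemma fate_exists (σ : TimedRun A n) {ks : List (Fin n)} (hne : ks ≠ []) :
    ∃ γ, FateOf σ ks γ := by
  classical
  have hk0 : ks.getLast? = some (ks.getLast hne) := List.getLast?_eq_getLast_of_ne_nil hne
  set k0 := ks.getLast hne with hk0def
  rcases hu : σ.upds k0 with _ | ⟨x, c⟩
  · refine ⟨Fate.bot, fun k hk => ?_⟩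
    rw [hk0, Option.some.injEq] at hk
    subst hk
    refine ⟨fun _ => rfl, fun x' c' hc => ?_⟩
    rw [hu] at hc; exact absurd hc (by simp)
  · by_cases hd : DiscardedAtZeroAfter σ k0 x
    · refine ⟨Fate.disc0, fun k hk => ?_⟩
      rw [hk0, Option.some.injEq] at hk
      subst hk
      refine ⟨fun h => by rw [hu] at h; exact absurd h (by simp), fun x' c' hc => ?_⟩
      rw [hu] at hc
      injection hc with h; injection h with h1 h2; subst h1
      exact ⟨fun _ => rfl, fun hnd => absurd hd hnd⟩
    · refine ⟨Fate.cross, fun k hk => ?_⟩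
      rw [hk0, Option.some.injEq] at hk
      subst hk
      refine ⟨fun h => by rw [hu] at h; exact absurd h (by simp), fun x' c' hc => ?_⟩
      rw [hu] at hc
      injection hc with h; injection h with h1 h2; subst h1
      exact ⟨fun hd' => absurd hd' hd, fun _ => rfl⟩

lemma isblock_transfer (h1 : ρ'.states = ρ.states) (h2 : ρ'.acts = ρ.acts)
    (h3 : ρ'.upds = ρ.upds) {ks : List (Fin n)} {γ : Fate} (hb : IsBlock ρ ks γ) :
    ∃ γ', IsBlock ρ' ks γ' := by
  obtain ⟨hne, hch, hhd, hmax, _⟩ := hb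
  obtain ⟨γ', hγ'⟩ := fate_exists ρ' hne
  refine ⟨γ', hne, ?_, ?_, ?_, hγ'⟩
  · exact hch.imp (fun {a b} h => (triggers_congr h1 h2 h3 a b).symm ▸ h)
  · intro k hk
    rw [h2]; exact hhd k hk
  · intro k k' hk
    rw [triggers_congr h1 h2 h3]
    exact hmax k k' hk

end Transfer

/-- After the last action of a block restarts `x`, the value of `x` at the first transition
discarding it is `c` minus the elapsed time. -/
lemma disc_delay (σ : TimedRun A n) {k' ℓ : Fin n} {x : X} {c : ℕ+}
    (hu : σ.upds k' = some (x, c)) (hk'ℓ : k' < ℓ) (hdisc : Discards σ ℓ x)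
    (hfirst : ∀ m, k' < m → m < ℓ → ¬ Discards σ m x)
    (hmax : ∀ p, ¬ Triggers σ k' p) :
    σ.vals ℓ.castSucc x - σ.delays ℓ.castSucc = (c : ℝ) - delayBetween σ k' ℓ ∧
      x ∈ A.χ (σ.states ℓ.castSucc) := by
  classical
  have hna : ∀ p : Fin n, k' < p → p < ℓ → σ.acts p ≠ Act.timeout x := by
    by_contra h
    push_neg at h
    obtain ⟨p, hp1, hp2, hp3⟩ := h
    set s : Finset (Fin n) :=
      Finset.univ.filter (fun q => k' < q ∧ q < ℓ ∧ σ.acts q = Act.timeout x) with hs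
    have hpmem : p ∈ s := by simp [hs, hp1, hp2, hp3]
    have hsne : s.Nonempty := ⟨p, hpmem⟩
    set m₀ := s.min' hsne with hm₀
    have hm₀mem : m₀ ∈ s := s.min'_mem hsne
    simp only [hs, Finset.mem_filter] at hm₀mem
    obtain ⟨-, h1, h2, h3⟩ := hm₀mem
    refine hmax m₀ ⟨h1, x, c, hu, h3, fun q hq1 hq2 => ⟨?_, hfirst q hq1 (lt_trans hq2 h2)⟩⟩
    intro hq3
    have hqs : q ∈ s := by simp [hs, hq1, lt_trans hq2 h2, hq3]
    exact absurd (s.min'_le q hqs) (not_le.2 hq2)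
  have hbet : ∀ p : Fin n, k' < p → p < ℓ → σ.acts p ≠ Act.timeout x ∧ ¬ Discards σ p x :=
    fun p h1 h2 => ⟨hna p h1 h2, hfirst p h1 h2⟩
  obtain ⟨hχ, hv⟩ := val_of_upd σ hu ℓ hk'ℓ hbet
  refine ⟨?_, hχ⟩
  rw [hv, delayBetween_split σ hk'ℓ]
  ring

/-- The offset of an action between two runs with the same discrete behaviour. -/
noncomputable def offset (ρ ρ' : TimedRun A n) (k : Fin n) : ℝ :=
  accTime ρ' k - accTime ρ k

/-- The offset of a block (the common offset of all its actions). -/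
noncomputable def blockOffset (ρ ρ' : TimedRun A n) (B : List (Fin n) × Fate) : ℝ :=
  B.1.head?.elim 0 (offset ρ ρ')

lemma blockOffset_eq {ρ ρ' : TimedRun A n} (h1 : ρ'.states = ρ.states)
    (h2 : ρ'.acts = ρ.acts) (h3 : ρ'.upds = ρ.upds) {B : List (Fin n) × Fate}
    (hb : IsBlock ρ B.1 B.2) {a : Fin n} (ha : a ∈ B.1) :
    blockOffset ρ ρ' B = offset ρ ρ' a := by
  obtain ⟨hne, hch, -, -, -⟩ := hb
  set R : Fin n → Fin n → Prop :=
    fun a b => a ≤ b ∧ delayBetween ρ a b = delayBetween ρ' a b with hR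
  have htrans : ∀ a b c, R a b → R b c → R a c := by
    rintro a b c ⟨hab, eab⟩ ⟨hbc, ebc⟩
    refine ⟨le_trans hab hbc, ?_⟩
    have q1 := delayBetween_add ρ hab hbc
    have q2 := delayBetween_add ρ' hab hbc
    linarith
  have himp : ∀ a b, Triggers ρ a b → R a b := by
    intro a b h
    obtain ⟨hlt, x, c, hu, -⟩ := id h
    have h' : Triggers ρ' a b := by rw [triggers_congr h1 h2 h3]; exact h
    have t1 := triggers_delay hu h
    have t2 := triggers_delay (show ρ'.upds a = some (x, c) by rw [h3]; exact hu) h'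
    exact ⟨le_of_lt hlt, by rw [t1, t2]⟩
  cases hBl : B.1 with
  | nil => exact absurd hBl hne
  | cons hd tl =>
    have hch' : List.Chain' R (hd :: tl) := by
      rw [hBl] at hch
      exact hch.imp (fun _ _ h => himp _ _ h)
    rw [hBl] at ha
    have := chain'_head_rel htrans hch' rfl ha
    have hDa : offset ρ ρ' a = offset ρ ρ' hd := by
      rcases this with rfl | ⟨hle, heq⟩
      · rfl
      · have q1 := accTime_add ρ hle
        have q2 := accTime_add ρ' hle
        unfold offset
        linarith
    rw [blockOffset, hBl]
    simp [hDa]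

/-- The key edge lemma: if `ρ'` (with the same discrete behaviour as `ρ`) has no race, then
each edge `B ≺ B'` of the block graph of `ρ` forces a strictly larger offset for `B'`. -/
lemma edge_offset_lt {ρ ρ' : TimedRun A n} (h1 : ρ'.states = ρ.states)
    (h2 : ρ'.acts = ρ.acts) (h3 : ρ'.upds = ρ.upds) (hno : ¬ HasRace ρ')
    {B B' : List (Fin n) × Fate} (hB : IsBlock ρ B.1 B.2) (hB' : IsBlock ρ B'.1 B'.2)
    (hedge : Prec ρ B B') : blockOffset ρ ρ' B < blockOffset ρ ρ' B' := by
  classical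
  rcases hedge with ⟨k, hkB, k', hk'B', hlt, hdel⟩ |
    ⟨hfate, k', x, c, hlastk', hu, ℓ, hℓB, hk'ℓ, hdisc, hfirst⟩
  · -- type-1 edge: zero total delay between k ∈ B and k' ∈ B'
    have hne12 : B.1 ≠ B'.1 := by
      intro he
      have hk'B : k' ∈ B.1 := he ▸ hk'B'
      set R2 : Fin n → Fin n → Prop :=
        fun a b => a < b ∧ 1 ≤ delayBetween ρ a b with hR2
      have htrans : ∀ a b c, R2 a b → R2 b c → R2 a c := by
        rintro a b c ⟨hab, eab⟩ ⟨hbc, ebc⟩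
        refine ⟨lt_trans hab hbc, ?_⟩
        have q := delayBetween_add ρ (le_of_lt hab) (le_of_lt hbc)
        have q2 := delayBetween_nonneg ρ b c
        linarith
      have hch2 : List.Chain' R2 B.1 := by
        refine hB.2.1.imp (fun _ _ h => ⟨h.1, ?_⟩)
        obtain ⟨hlt', x, c, hu, -⟩ := id h
        rw [triggers_delay hu h]
        exact_mod_cast c.one_le
      have := chain'_rel_of_lt htrans (fun a b h => h.1) hch2 hkB hk'B hlt
      linarith [this.2, hdel]
    have hpos : 0 < delayBetween ρ' k k' := by
      rcases (delayBetween_nonneg ρ' k k').lt_or_eq with h | h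
      · exact h
      · exfalso
        obtain ⟨γ1, hγ1⟩ := isblock_transfer h1 h2 h3 hB
        obtain ⟨γ2, hγ2⟩ := isblock_transfer h1 h2 h3 hB'
        exact hno ⟨(B.1, γ1), (B'.1, γ2), hγ1, hγ2,
          fun hp => hne12 (Prod.ext_iff.mp hp).1,
          Or.inl (Or.inl ⟨k, hkB, k', hk'B', hlt, h.symm⟩)⟩
    rw [blockOffset_eq h1 h2 h3 hB hkB, blockOffset_eq h1 h2 h3 hB' hk'B']
    have q1 := accTime_add ρ (le_of_lt hlt)
    have q2 := accTime_add ρ' (le_of_lt hlt)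
    unfold offset
    linarith
  · -- type-2 edge
    obtain ⟨hne', hch', hhd', hmax', hfate'⟩ := hB'
    have hdza : DiscardedAtZeroAfter ρ k' x := by
      by_contra hnd
      have := (((hfate' k' hlastk').2) x c hu).2 hnd
      rw [hfate] at this
      exact Fate.noConfusion this
    obtain ⟨ℓ₀, hkℓ₀, hdisc₀, hfirst₀, hzero⟩ := hdza
    have hℓeq : ℓ₀ = ℓ := by
      rcases lt_trichotomy ℓ ℓ₀ with h | h | h
      · exact absurd hdisc (hfirst₀ ℓ hk'ℓ h)
      · exact h.symm
      · exact absurd hdisc₀ (hfirst ℓ₀ hkℓ₀ h)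
    subst hℓeq
    have hmaxk' : ∀ p, ¬ Triggers ρ ℓ₀ p → True := fun _ _ => trivial
    have hmaxT : ∀ p, ¬ Triggers ρ k' p := fun p => hmax' k' p hlastk'
    obtain ⟨hvρ, hχρ⟩ := disc_delay ρ hu hk'ℓ hdisc hfirst hmaxT
    have hu' : ρ'.upds k' = some (x, c) := by rw [h3]; exact hu
    have hdisc' : Discards ρ' ℓ₀ x := by rw [discards_congr h1 h2 h3]; exact hdisc
    have hfirst' : ∀ m, k' < m → m < ℓ₀ → ¬ Discards ρ' m x := fun m hm1 hm2 => by
      rw [discards_congr h1 h2 h3]; exact hfirst m hm1 hm2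
    have hmaxT' : ∀ p, ¬ Triggers ρ' k' p := fun p => by
      rw [triggers_congr h1 h2 h3]; exact hmaxT p
    obtain ⟨hvρ', hχρ'⟩ := disc_delay ρ' hu' hk'ℓ hdisc' hfirst' hmaxT'
    have hcρ : delayBetween ρ k' ℓ₀ = (c : ℝ) := by rw [hvρ] at hzero; linarith
    have hge : 0 ≤ ρ'.vals ℓ₀.castSucc x - ρ'.delays ℓ₀.castSucc := by
      have := ρ'.delays_le ℓ₀.castSucc x hχρ'
      linarith
    rcases hge.lt_or_eq with hpos | heq0
    · -- strictly positive value : strictly smaller elapsed time in ρ'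
      have hlt' : delayBetween ρ' k' ℓ₀ < (c : ℝ) := by rw [hvρ'] at hpos; linarith
      have hk'mem : k' ∈ B'.1 := List.mem_of_mem_getLast? hlastk'
      rw [blockOffset_eq h1 h2 h3 (⟨hne', hch', hhd', hmax', hfate'⟩ : IsBlock ρ B'.1 B'.2)
        hk'mem, blockOffset_eq h1 h2 h3 hB hℓB]
      have q1 := accTime_add ρ (le_of_lt hk'ℓ)
      have q2 := accTime_add ρ' (le_of_lt hk'ℓ)
      unfold offset
      linarith
    · -- value zero : a race in ρ'
      exfalso
      have hdza' : DiscardedAtZeroAfter ρ' k' x := ⟨ℓ₀, hk'ℓ, hdisc', hfirst', heq0.symm⟩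
      have hblk2' : IsBlock ρ' B'.1 Fate.disc0 := by
        refine ⟨hne', hch'.imp (fun _ _ h => by
            rw [triggers_congr h1 h2 h3]; exact h), ?_, ?_, ?_⟩
        · intro k hk; rw [h2]; exact hhd' k hk
        · intro k k'' hk; rw [triggers_congr h1 h2 h3]; exact hmax' k k'' hk
        · intro k hk
          rw [hlastk', Option.some.injEq] at hk
          subst hk
          refine ⟨fun h => by rw [hu'] at h; exact absurd h (by simp), fun x' c' hc => ?_⟩
          rw [hu'] at hc
          injection hc with h; injection h with ha hb
          subst ha
          exact ⟨fun _ => rfl, fun hnd => absurd hdza' hnd⟩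
      obtain ⟨γ1, hγ1⟩ := isblock_transfer h1 h2 h3 hB
      have hne12 : B.1 ≠ B'.1 := by
        intro he
        have hℓB' : ℓ₀ ∈ B'.1 := he ▸ hℓB
        have hchlt : List.Chain' (· < ·) B'.1 := hch'.imp (fun _ _ h => h.1)
        rcases chain'_last_rel (R := (· < ·)) (fun _ _ _ h h' => lt_trans h h') hchlt hlastk' hℓB' with rfl | h
        · exact absurd hk'ℓ (lt_irrefl _)
        · exact absurd (lt_trans hk'ℓ h) (lt_irrefl _)
      exact hno ⟨(B.1, γ1), (B'.1, Fate.disc0), hγ1, hblk2',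
        fun hp => hne12 (Prod.ext_iff.mp hp).1,
        Or.inl (Or.inr ⟨rfl, k', x, c, hlastk', hu', ℓ₀, hℓB, hk'ℓ, hdisc', hfirst'⟩)⟩

end AwT

/-- If the block graph of a padded timed run `ρ` of `A` is cyclic, then every
padded timed run of `A` with the same untimed trace as `ρ` contains at least one race. -/
theorem cyclic_block_graph_forces_race {X I Q : Type} [DecidableEq X] [Fintype X] [Fintype I]
    [Fintype Q] (A : AwT.AT X I Q) (n : ℕ) (ρ : AwT.TimedRun A n)
    (hρ : AwT.Padded ρ) (hc : AwT.HasCycle ρ) :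
    ∀ (n' : ℕ) (ρ' : AwT.TimedRun A n'), AwT.Padded ρ' → AwT.untime ρ' = AwT.untime ρ →
      AwT.HasRace ρ' := by
  classical
  intro n' ρ' hpad' huntime
  -- the two runs have the same length
  have hlen : n' = n := by
    have := congrArg (fun p => p.1.length) huntime
    simpa [AwT.untime] using this
  subst hlen
  -- and the same states, actions and updates
  have h1 : (fun k : Fin n' => (ρ'.states k.castSucc, ρ'.acts k)) =
      (fun k : Fin n' => (ρ.states k.castSucc, ρ.acts k)) := by
    have := congrArg Prod.fst huntime
    simp only [AwT.untime, List.ofFn_inj] at this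
    exact this
  have h2 : ρ'.states (Fin.last n') = ρ.states (Fin.last n') := by
    have := congrArg Prod.snd huntime
    simpa [AwT.untime] using this
  have hst : ρ'.states = ρ.states := by
    funext j
    rcases Fin.eq_castSucc_or_eq_last j with ⟨k, rfl⟩ | rfl
    · exact congrArg Prod.fst (congrFun h1 k)
    · exact h2
  have hac : ρ'.acts = ρ.acts := funext fun k => congrArg Prod.snd (congrFun h1 k)
  have hup : ρ'.upds = ρ.upds := by
    funext k
    have t1 := ρ.trans k
    have t2 := ρ'.trans k
    rw [hst, hac, t1] at t2
    injection t2 with h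
    injection h with _ hh
    exact hh.symm
  -- suppose for contradiction that `ρ'` has no race
  by_contra hno
  obtain ⟨m, f, hm, hblk, hcyc, hedge⟩ := hc
  -- every edge of the (cyclic) block graph strictly increases the block offset
  have key : ∀ j : Fin m, AwT.blockOffset ρ ρ' (f j.castSucc) < AwT.blockOffset ρ ρ' (f j.succ) :=
    fun j => AwT.edge_offset_lt hst hac hup hno (hblk j.castSucc) (hblk j.succ) (hedge j)
  have key' : ∀ jn : ℕ, (h : jn < m) →
      AwT.blockOffset ρ ρ' (f ⟨jn, Nat.lt_succ_of_lt h⟩) <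
        AwT.blockOffset ρ ρ' (f ⟨jn + 1, Nat.succ_lt_succ h⟩) :=
    fun jn h => key ⟨jn, h⟩
  have mono : ∀ jn : ℕ, (h : jn ≤ m) → 0 < jn →
      AwT.blockOffset ρ ρ' (f 0) < AwT.blockOffset ρ ρ' (f ⟨jn, Nat.lt_succ_of_le h⟩) := by
    intro jn
    induction jn with
    | zero => intro _ h0; exact absurd h0 (lt_irrefl 0)
    | succ p ih =>
      intro h _
      rcases Nat.eq_zero_or_pos p with rfl | hp
      · have hk := key' 0 (by omega)
        have h0 : (0 : Fin (m + 1)) = ⟨0, Nat.lt_succ_of_lt (by omega)⟩ := by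
          apply Fin.ext; simp
        rw [h0]
        exact hk
      · exact lt_trans (ih (by omega) hp) (key' p (by omega))
  have hfin := mono m le_rfl hm
  have hlast' : (⟨m, Nat.lt_succ_of_le le_rfl⟩ : Fin (m + 1)) = Fin.last m := rfl
  rw [hlast', hcyc] at hfin
  exact lt_irrefl _ hfin
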